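/- Let m ≥ n ≥ 2 and let U be an n×m matrix with nonnegative entries whose rows each sum to 1. Then σ₁(U)² + σ₂(U)² = n if and only if every row of U has exactly one nonzero entry (which then equals 1) and at most two columns of U contain a nonzero entry. -/

import Mathlib

/-- The `k`-th largest singular value (`k` is 0-indexed, so `σ₁ = singVal U 0`,
`σ₂ = singVal U 1`): the square root of the `k`-th largest eigenvalue of the
Gram matrix `Uᵀ U` (for real matrices `Uᴴ = Uᵀ`). -/
noncomputable def singVal {α β : Type*} [Fintype α] [Fintype β] [DecidableEq β]
    (U : Matrix α β ℝ) (k : ℕ) : ℝ :=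
  Real.sqrt
    (((Finset.univ.val.map
      (Matrix.isHermitian_conjTranspose_mul_self U).eigenvalues).sort (· ≥ ·)).getD k 0)

open Matrix Finset

lemma myTrace {p : Type*} [Fintype p] [DecidableEq p]
    {A : Matrix p p ℝ} (hA : A.IsHermitian) :
    A.trace = ∑ i, hA.eigenvalues i := by
  rw [hA.trace_eq_sum_eigenvalues]
  simp

lemma gram_diag {n m : ℕ} (U : Matrix (Fin n) (Fin m) ℝ)
    (h01 : ∀ i, ∃ j, U i j = 1 ∧ ∀ j', j' ≠ j → U i j' = 0) :
    Uᴴ * U = Matrix.diagonal (fun j => ∑ i, U i j) := by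
  have hent : ∀ i j, U i j = 0 ∨ U i j = 1 := by
    intro i j
    obtain ⟨j0, h1, h0⟩ := h01 i
    by_cases hj : j = j0
    · right; rw [hj]; exact h1
    · left; exact h0 j hj
  ext j j'
  by_cases h : j = j'
  · subst h
    rw [Matrix.diagonal_apply_eq, Matrix.mul_apply]
    refine Finset.sum_congr rfl fun i _ => ?_
    rcases hent i j with h | h <;> simp [Matrix.conjTranspose_apply, h]
  · rw [Matrix.diagonal_apply_ne _ h, Matrix.mul_apply]
    refine Finset.sum_eq_zero fun i _ => ?_
    obtain ⟨j0, h1, h0⟩ := h01 i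
    rcases ne_or_eq j j0 with hj | hj
    · simp [Matrix.conjTranspose_apply, h0 j hj]
    · have hj' : j' ≠ j0 := by rw [← hj]; exact Ne.symm h
      simp [Matrix.conjTranspose_apply, h0 j' hj']

lemma card_cols {n m : ℕ} (U : Matrix (Fin n) (Fin m) ℝ)
    (hU : ∀ i j, 0 ≤ U i j)
    (h01 : ∀ i, ∃ j, U i j = 1 ∧ ∀ j', j' ≠ j → U i j' = 0) :
    (Finset.univ.filter fun j => ∃ i, U i j ≠ 0).card
      = Multiset.countP (fun x => x ≠ 0)
          (Finset.univ.val.map (Matrix.isHermitian_conjTranspose_mul_self U).eigenvalues) := by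
  classical
  have h1 : (Uᴴ * U).rank
      = Fintype.card {j // (Matrix.isHermitian_conjTranspose_mul_self U).eigenvalues j ≠ 0} :=
    (Matrix.isHermitian_conjTranspose_mul_self U).rank_eq_card_non_zero_eigs
  have h2 : (Uᴴ * U).rank = Fintype.card {j // (∑ i, U i j) ≠ 0} := by
    rw [gram_diag U h01]; exact Matrix.rank_diagonal _
  have h3 : Multiset.countP (fun x => x ≠ 0)
      (Finset.univ.val.map (Matrix.isHermitian_conjTranspose_mul_self U).eigenvalues)
      = Fintype.card {j // (Matrix.isHermitian_conjTranspose_mul_self U).eigenvalues j ≠ 0} := by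
    rw [Multiset.countP_map, Fintype.card_subtype]
    rfl
  have h4 : (Finset.univ.filter fun j => ∃ i, U i j ≠ 0)
      = (Finset.univ.filter fun j => (∑ i, U i j) ≠ 0) := by
    refine Finset.filter_congr fun j _ => ?_
    rw [Ne, Finset.sum_eq_zero_iff_of_nonneg (fun i _ => hU i j)]
    push_neg
    simp
  rw [h4, h3, ← h1, h2, Fintype.card_subtype]

/-- **"North" boundary (characterization):** for a row-stochastic `n × m` matrix
`U` with `m ≥ n ≥ 2`, `σ₁(U)² + σ₂(U)² = n` iff every row has exactly one
nonzero entry (which then equals 1) and at most two columns of `U` contain a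
nonzero entry. -/
theorem singVal_sq_add_sq_eq_iff (n m : ℕ) (hn : 2 ≤ n) (hm : n ≤ m)
    (U : Matrix (Fin n) (Fin m) ℝ)
    (hU : ∀ i j, 0 ≤ U i j) (hUrow : ∀ i, ∑ j, U i j = 1) :
    singVal U 0 ^ 2 + singVal U 1 ^ 2 = (n : ℝ) ↔
      ((∀ i, ∃ j, U i j = 1 ∧ ∀ j', j' ≠ j → U i j' = 0) ∧
        (Finset.univ.filter fun j => ∃ i, U i j ≠ 0).card ≤ 2) := by
  classical
  have hm2 : 2 ≤ m := hn.trans hm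
  simp only [singVal]
  set L := ((Finset.univ.val.map
      (Matrix.isHermitian_conjTranspose_mul_self U).eigenvalues).sort (· ≥ ·)) with hLdef
  have hsorted : L.Pairwise (· ≥ ·) := Multiset.pairwise_sort _ _
  have hcoe : (L : Multiset ℝ)
      = Finset.univ.val.map (Matrix.isHermitian_conjTranspose_mul_self U).eigenvalues :=
    Multiset.sort_eq _ _
  have hlen : L.length = m := by
    rw [hLdef, Multiset.length_sort, Multiset.card_map]
    simp
  have hnn : ∀ x ∈ L, 0 ≤ x := by
    intro x hx
    rw [hLdef, Multiset.mem_sort, Multiset.mem_map] at hx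
    obtain ⟨j, _, rfl⟩ := hx
    exact Matrix.eigenvalues_conjTranspose_mul_self_nonneg U j
  have hLsum : L.sum = ∑ i, ∑ j, U i j ^ 2 := by
    have h1 : L.sum = ((L : Multiset ℝ)).sum := (Multiset.sum_coe L).symm
    rw [h1, hcoe]
    have h2 : (Finset.univ.val.map
        (Matrix.isHermitian_conjTranspose_mul_self U).eigenvalues).sum
        = ∑ j, (Matrix.isHermitian_conjTranspose_mul_self U).eigenvalues j := rfl
    rw [h2, ← myTrace (Matrix.isHermitian_conjTranspose_mul_self U)]
    rw [Matrix.trace]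
    simp only [Matrix.diag_apply, Matrix.mul_apply, Matrix.conjTranspose_apply, star_trivial]
    rw [Finset.sum_comm]
    simp [sq]
  clear_value L
  clear hLdef
  rcases L with _ | ⟨a, _ | ⟨b, t⟩⟩
  · simp at hlen; omega
  · simp at hlen; omega
  have ha0 : 0 ≤ a := hnn a (by simp)
  have hb0 : 0 ≤ b := hnn b (by simp)
  have htnn : ∀ x ∈ t, 0 ≤ x := fun x hx => hnn x (by simp [hx])
  have hab : b ≤ a := (List.pairwise_cons.mp hsorted).1 b (by simp)
  have hbt : ∀ x ∈ t, x ≤ b := fun x hx =>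
    ((List.pairwise_cons.mp (List.pairwise_cons.mp hsorted).2).1 x hx)
  have hg0 : (a :: b :: t).getD 0 0 = a := rfl
  have hg1 : (a :: b :: t).getD 1 0 = b := rfl
  rw [hg0, hg1, Real.sq_sqrt ha0, Real.sq_sqrt hb0]
  have hsum3 : (a :: b :: t).sum = a + b + t.sum := by simp [add_assoc]
  have hle1 : ∀ i j, U i j ≤ 1 := fun i j => by
    rw [← hUrow i]
    exact Finset.single_le_sum (fun j' _ => hU i j') (Finset.mem_univ j)
  have hsq_le : ∀ i j, U i j ^ 2 ≤ U i j := fun i j => by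
    nth_rewrite 2 [← mul_one (U i j)]
    rw [sq]
    exact mul_le_mul_of_nonneg_left (hle1 i j) (hU i j)
  have hUn : ∑ i, ∑ j, U i j = (n : ℝ) := by simp [hUrow]
  have hFle : ∑ i, ∑ j, U i j ^ 2 ≤ (n : ℝ) := by
    calc ∑ i, ∑ j, U i j ^ 2 ≤ ∑ i, ∑ j, U i j :=
          Finset.sum_le_sum fun i _ => Finset.sum_le_sum fun j _ => hsq_le i j
      _ = n := hUn
  have htsum0 : 0 ≤ t.sum := List.sum_nonneg htnn
  have hcons : ((a :: b :: t : List ℝ) : Multiset ℝ) = a ::ₘ b ::ₘ (t : Multiset ℝ) := rfl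
  constructor
  · intro h
    have hFn : ∑ i, ∑ j, U i j ^ 2 = (n : ℝ) := by
      have h' := hLsum; rw [hsum3] at h'; linarith
    have ht0 : t.sum = 0 := by
      have h' := hLsum; rw [hsum3] at h'; linarith
    have hsq_eq : ∀ i j, U i j ^ 2 = U i j := by
      by_contra hcon
      push_neg at hcon
      obtain ⟨i0, j0, hne⟩ := hcon
      have hlt : ∑ i, ∑ j, U i j ^ 2 < ∑ i, ∑ j, U i j := by
        refine Finset.sum_lt_sum (fun i _ => Finset.sum_le_sum fun j _ => hsq_le i j)
          ⟨i0, Finset.mem_univ i0, ?_⟩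
        exact Finset.sum_lt_sum (fun j _ => hsq_le i0 j)
          ⟨j0, Finset.mem_univ j0, lt_of_le_of_ne (hsq_le i0 j0) hne⟩
      rw [hFn, hUn] at hlt
      exact lt_irrefl _ hlt
    have hent : ∀ i j, U i j = 0 ∨ U i j = 1 := by
      intro i j
      have h' : U i j * (U i j - 1) = 0 := by linear_combination hsq_eq i j
      rcases mul_eq_zero.mp h' with h'' | h''
      · exact Or.inl h''
      · exact Or.inr (by linarith [sub_eq_zero.mp h''])
    have h01 : ∀ i, ∃ j, U i j = 1 ∧ ∀ j', j' ≠ j → U i j' = 0 := by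
      intro i
      have hex : ∃ j, U i j = 1 := by
        by_contra hno
        push_neg at hno
        have hall : ∀ j, U i j = 0 := fun j => (hent i j).resolve_right (hno j)
        have h2 := hUrow i
        rw [Finset.sum_eq_zero (fun j _ => hall j)] at h2
        exact zero_ne_one h2
      obtain ⟨j, hj⟩ := hex
      refine ⟨j, hj, fun j' hj' => ?_⟩
      by_contra hne0
      have hj'1 : U i j' = 1 := (hent i j').resolve_left hne0
      have hpair : U i j + U i j' ≤ ∑ j'', U i j'' := by
        have hsub := Finset.sum_le_sum_of_subset_of_nonneg
          (Finset.subset_univ ({j, j'} : Finset (Fin m))) (fun k _ _ => hU i k)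
        rwa [Finset.sum_pair (Ne.symm hj')] at hsub
      rw [hUrow i, hj, hj'1] at hpair
      linarith
    refine ⟨h01, ?_⟩
    rw [card_cols U hU h01, ← hcoe]
    have hct : Multiset.countP (fun x => x ≠ 0) (t : Multiset ℝ) = 0 := by
      rw [Multiset.countP_eq_zero]
      intro x hx
      simp only [ne_eq, not_not]
      exact List.all_zero_of_le_zero_le_of_sum_eq_zero htnn ht0 (Multiset.mem_coe.mp hx)
    rw [hcons, Multiset.countP_cons, Multiset.countP_cons, hct]
    split_ifs <;> norm_num
  · rintro ⟨h01, hcols⟩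
    have hent : ∀ i j, U i j = 0 ∨ U i j = 1 := by
      intro i j
      obtain ⟨j0, h1, h0⟩ := h01 i
      by_cases hj : j = j0
      · right; rw [hj]; exact h1
      · left; exact h0 j hj
    have hFn : ∑ i, ∑ j, U i j ^ 2 = (n : ℝ) := by
      have hsq : ∀ i j, U i j ^ 2 = U i j := by
        intro i j; rcases hent i j with h | h <;> rw [h] <;> norm_num
      calc ∑ i, ∑ j, U i j ^ 2 = ∑ i, ∑ j, U i j :=
            Finset.sum_congr rfl fun i _ => Finset.sum_congr rfl fun j _ => hsq i j
        _ = n := hUn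
    rw [card_cols U hU h01, ← hcoe] at hcols
    have hts : ∀ x ∈ t, x = 0 := by
      by_contra hcon
      push_neg at hcon
      obtain ⟨x, hx, hxne⟩ := hcon
      have hxpos : 0 < x := lt_of_le_of_ne (htnn x hx) (Ne.symm hxne)
      have hbpos : 0 < b := lt_of_lt_of_le hxpos (hbt x hx)
      have hapos : 0 < a := lt_of_lt_of_le hbpos hab
      have hctpos : 0 < Multiset.countP (fun x => x ≠ 0) (t : Multiset ℝ) :=
        Multiset.countP_pos.mpr ⟨x, Multiset.mem_coe.mpr hx, hxne⟩
      rw [hcons, Multiset.countP_cons, Multiset.countP_cons] at hcols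
      rw [if_pos (ne_of_gt hapos), if_pos (ne_of_gt hbpos)] at hcols
      omega
    have ht0 : t.sum = 0 := List.sum_eq_zero hts
    rw [hsum3, ht0] at hLsum
    linarith
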